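/- The linear map φ on R^4 sending the standard basis vectors e_1, e_2, e_3, e_4 to (1/2)(-1,1,1,1), (1/2)(-1,-1,1,-1), (1/2)(-1,-1,-1,1), (1/2)(-1,1,-1,-1) respectively is an isometry of order 3 that preserves the lattice D_4, and φ acts on D_4 without nonzero fixed vectors. -/

import Mathlib

open Finset

/-- The root lattice `D₄ = {x ∈ ℤ⁴ : x₁+x₂+x₃+x₄ ∈ 2ℤ}`, realized inside `ℚ⁴`. -/
def D4Lat : Set (Fin 4 → ℚ) :=
  {x | (∀ i, ∃ m : ℤ, x i = m) ∧ ∃ m : ℤ, ∑ i, x i = 2 * m}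

/-- The linear map `φ` sending the standard basis vectors `e₁, e₂, e₃, e₄` to
`(1/2)(-1,1,1,1)`, `(1/2)(-1,-1,1,-1)`, `(1/2)(-1,-1,-1,1)`, `(1/2)(-1,1,-1,-1)`. -/
def phiD4 : (Fin 4 → ℚ) → (Fin 4 → ℚ) :=
  fun x => ![(-x 0 - x 1 - x 2 - x 3) / 2, (x 0 - x 1 - x 2 + x 3) / 2,
             (x 0 + x 1 - x 2 - x 3) / 2, (x 0 - x 1 + x 2 - x 3) / 2]

/-- `φ` is an isometry of order 3 (`φ³ = id`, `φ ≠ id`, `⟨φx, φy⟩ = ⟨x, y⟩`) preserving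
the lattice `D₄`, and it has no nonzero fixed vector in `D₄`. -/
theorem phiD4_isometry_order_three_fixed_point_free :
    (∀ x, phiD4 (phiD4 (phiD4 x)) = x) ∧
    (phiD4 ≠ id) ∧
    (∀ x y : Fin 4 → ℚ, ∑ i, phiD4 x i * phiD4 y i = ∑ i, x i * y i) ∧
    (∀ x ∈ D4Lat, phiD4 x ∈ D4Lat) ∧
    (∀ x ∈ D4Lat, phiD4 x = x → x = 0) := by
  refine ⟨?_, ?_, ?_, ?_, ?_⟩
  · intro x
    funext i
    fin_cases i <;> simp [phiD4] <;> ring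
  · intro h
    have := congrFun (congrFun h ![1, 0, 0, 0]) 0
    norm_num [phiD4] at this
    rw [show (![1, 0, 0, 0] : Fin 4 → ℚ) 2 = 0 from rfl, show (![1, 0, 0, 0] : Fin 4 → ℚ) 3 = 0 from rfl] at this; norm_num at this
  · intro x y
    simp [phiD4, Fin.sum_univ_four]
    ring
  · rintro x ⟨hint, m, hsum⟩
    rw [Fin.sum_univ_four] at hsum
    obtain ⟨a0, h0⟩ := hint 0
    obtain ⟨a1, h1⟩ := hint 1
    obtain ⟨a2, h2⟩ := hint 2
    obtain ⟨a3, h3⟩ := hint 3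
    refine ⟨?_, ?_⟩
    · intro i
      fin_cases i
      · exact ⟨-m, by simp [phiD4]; push_cast; linarith⟩
      · exact ⟨m - a1 - a2, by simp [phiD4]; push_cast; linarith⟩
      · exact ⟨m - a2 - a3, by simp [phiD4]; push_cast; linarith⟩
      · exact ⟨m - a1 - a3, by simp [phiD4]; push_cast; linarith⟩
    · refine ⟨m - a1 - a2 - a3, ?_⟩
      rw [Fin.sum_univ_four]
      simp [phiD4]
      push_cast
      linarith
  · rintro x - hfix
    have h0 := congrFun hfix 0
    have h1 := congrFun hfix 1
    have h2 := congrFun hfix 2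
    have h3 := congrFun hfix 3
    simp [phiD4] at h0 h1 h2 h3
    funext i
    fin_cases i <;> simp <;> linarith
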